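/- Let M_1 and M_2 be matroids on disjoint finite ground sets E_1 and E_2, of ranks r_1 and r_2 respectively. Then the base polytope P(M_1 ⊕ M_2) of the direct sum admits a hyperplane split if and only if P(M_1) admits a hyperplane split or P(M_2) admits a hyperplane split. -/

import Mathlib

open Matroid Set

/-- The rank of a matroid: the supremum of the cardinalities of its independent sets. -/
noncomputable def mrk {α : Type*} (M : Matroid α) : ℕ :=
  sSup {n : ℕ | ∃ I, M.Indep I ∧ I.ncard = n}

/-- The 0/1 incidence vector of a set. -/
noncomputable def incVec {α : Type*} (B : Set α) : α → ℝ := B.indicator 1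

/-- The matroid base polytope: the convex hull of the incidence vectors of the bases. -/
noncomputable def basePolytope {α : Type*} (M : Matroid α) : Set (α → ℝ) :=
  convexHull ℝ {x | ∃ B, M.IsBase B ∧ x = incVec B}

/-- `P(M)` admits a hyperplane split : `P(M) = P(N₁) ∪ P(N₂)` for matroids `N₁, N₂` on the
same ground set, each `P(Nᵢ)` a proper subset of `P(M)`, with `P(N₁) ∩ P(N₂)` a face of
both pieces. -/
def HasHyperplaneSplit {α : Type*} (M : Matroid α) : Prop :=
  ∃ N₁ N₂ : Matroid α, N₁.E = M.E ∧ N₂.E = M.E ∧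
    basePolytope M = basePolytope N₁ ∪ basePolytope N₂ ∧
    basePolytope N₁ ⊂ basePolytope M ∧ basePolytope N₂ ⊂ basePolytope M ∧
    IsExtreme ℝ (basePolytope N₁) (basePolytope N₁ ∩ basePolytope N₂) ∧
    IsExtreme ℝ (basePolytope N₂) (basePolytope N₁ ∩ basePolytope N₂)


section Aux
variable {α : Type*}

lemma incVec_of_mem {B : Set α} {e : α} (he : e ∈ B) : incVec B e = 1 := by
  simp [incVec, indicator_of_mem he]

lemma incVec_of_not_mem {B : Set α} {e : α} (he : e ∉ B) : incVec B e = 0 := by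
  simp [incVec, indicator_of_notMem he]

lemma incVec_eq_zero_or_one (B : Set α) (e : α) : incVec B e = 0 ∨ incVec B e = 1 := by
  by_cases he : e ∈ B
  · exact Or.inr (incVec_of_mem he)
  · exact Or.inl (incVec_of_not_mem he)

lemma incVec_inj {B C : Set α} (hBC : incVec B = incVec C) : B = C := by
  ext e
  constructor
  · intro he
    by_contra hc
    have := congrFun hBC e
    rw [incVec_of_mem he, incVec_of_not_mem hc] at this
    exact one_ne_zero this
  · intro he
    by_contra hc
    have := congrFun hBC e
    rw [incVec_of_mem he, incVec_of_not_mem hc] at this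
    exact one_ne_zero this.symm

lemma incVec_union {B C : Set α} (h : Disjoint B C) :
    incVec (B ∪ C) = incVec B + incVec C := by
  funext e
  by_cases hB : e ∈ B
  · have hC : e ∉ C := fun hc => (Set.disjoint_left.mp h hB) hc
    simp [Pi.add_apply, incVec_of_mem (Set.mem_union_left _ hB), incVec_of_mem hB,
      incVec_of_not_mem hC]
  · by_cases hC : e ∈ C
    · simp [Pi.add_apply, incVec_of_mem (Set.mem_union_right _ hC), incVec_of_not_mem hB,
        incVec_of_mem hC]
    · have : e ∉ B ∪ C := by simp [hB, hC]
      simp [Pi.add_apply, incVec_of_not_mem this, incVec_of_not_mem hB, incVec_of_not_mem hC]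

end Aux

section Aux2
variable {α : Type*}

lemma basePolytope_supported (N : Matroid α) :
    basePolytope N ⊆ {x : α → ℝ | ∀ e ∉ N.E, x e = 0} := by
  apply convexHull_min
  · rintro x ⟨B, hB, rfl⟩ e he
    exact incVec_of_not_mem (fun hmem => he (hB.subset_ground hmem))
  · intro x hx y hy a b ha hb hab e he
    simp only [Pi.add_apply, Pi.smul_apply, smul_eq_mul, hx e he, hy e he, mul_zero, add_zero]

lemma basePolytope_cube (N : Matroid α) :
    basePolytope N ⊆ {x : α → ℝ | ∀ e, 0 ≤ x e ∧ x e ≤ 1} := by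
  apply convexHull_min
  · rintro x ⟨B, hB, rfl⟩ e
    rcases incVec_eq_zero_or_one B e with h | h <;> rw [h] <;> norm_num
  · intro x hx y hy a b ha hb hab e
    obtain ⟨hx0, hx1⟩ := hx e
    obtain ⟨hy0, hy1⟩ := hy e
    constructor
    · have : (0:ℝ) ≤ a * x e + b * y e := by positivity
      simpa [Pi.add_apply, Pi.smul_apply, smul_eq_mul] using this
    · have : a * x e + b * y e ≤ 1 := by nlinarith
      simpa [Pi.add_apply, Pi.smul_apply, smul_eq_mul] using this

lemma base_of_incVec_mem {N : Matroid α} {B : Set α}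
    (hB : incVec B ∈ basePolytope N) : N.IsBase B := by
  classical
  have hcube : ∀ y ∈ basePolytope N, ∀ e, 0 ≤ y e ∧ y e ≤ 1 := fun y hy => basePolytope_cube N hy
  rw [basePolytope, convexHull_eq] at hB
  obtain ⟨ι, t, w, z, hw0, hw1, hz, hcm⟩ := hB
  rw [Finset.centerMass_eq_of_sum_1 _ _ hw1] at hcm
  obtain ⟨i₀, hi₀t, hi₀⟩ := Finset.exists_ne_zero_of_sum_ne_zero (by rw [hw1]; exact one_ne_zero)
  have hwpos : 0 < w i₀ := lt_of_le_of_ne (hw0 i₀ hi₀t) (Ne.symm hi₀)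
  obtain ⟨B₀, hB₀, hzB₀⟩ := hz i₀ hi₀t
  have key : z i₀ = incVec B := by
    funext e
    have hsum : ∑ i ∈ t, w i * z i e = incVec B e := by
      have := congrFun hcm e
      simpa [Finset.sum_apply, Pi.smul_apply, smul_eq_mul] using this
    have hz0 : ∀ i ∈ t, 0 ≤ z i e ∧ z i e ≤ 1 := by
      intro i hi
      obtain ⟨Bi, hBi, hzi⟩ := hz i hi
      rw [hzi]
      rcases incVec_eq_zero_or_one Bi e with h | h <;> rw [h] <;> norm_num
    rcases incVec_eq_zero_or_one B e with h0 | h1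
    · rw [h0] at hsum ⊢
      have hall : ∀ i ∈ t, w i * z i e = 0 := by
        rw [← Finset.sum_eq_zero_iff_of_nonneg]
        · exact hsum
        · intro i hi
          exact mul_nonneg (hw0 i hi) (hz0 i hi).1
      have := hall i₀ hi₀t
      rcases mul_eq_zero.mp this with h | h
      · exact absurd h hi₀
      · exact h
    · rw [h1] at hsum ⊢
      have hsum' : ∑ i ∈ t, w i * (1 - z i e) = 0 := by
        have : ∑ i ∈ t, w i * (1 - z i e) = (∑ i ∈ t, w i) - ∑ i ∈ t, w i * z i e := by
          rw [← Finset.sum_sub_distrib]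
          congr 1
          funext i
          ring
        rw [this, hw1, hsum, sub_self]
      have hall : ∀ i ∈ t, w i * (1 - z i e) = 0 := by
        rw [← Finset.sum_eq_zero_iff_of_nonneg]
        · exact hsum'
        · intro i hi
          exact mul_nonneg (hw0 i hi) (by linarith [(hz0 i hi).2])
      have := hall i₀ hi₀t
      rcases mul_eq_zero.mp this with h | h
      · exact absurd h hi₀
      · linarith
  have : incVec B₀ = incVec B := by rw [← hzB₀]; exact key
  rwa [incVec_inj this] at hB₀

lemma incVec_mem_basePolytope {N : Matroid α} {B : Set α} (h : N.IsBase B) :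
    incVec B ∈ basePolytope N :=
  subset_convexHull ℝ _ ⟨B, h, rfl⟩

end Aux2

section Aux3
open Pointwise
variable {α : Type*}

lemma union_inter_left' {A B E₁ E₂ : Set α} (hd : Disjoint E₁ E₂)
    (hA : A ⊆ E₁) (hB : B ⊆ E₂) : (A ∪ B) ∩ E₁ = A := by
  rw [Set.union_inter_distrib_right, inter_eq_self_of_subset_left hA]
  have : B ∩ E₁ = ∅ := by
    apply Set.eq_empty_of_forall_notMem
    intro x ⟨hxB, hxE⟩
    exact Set.disjoint_left.mp hd hxE (hB hxB)
  rw [this, union_empty]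

lemma union_inter_right' {A B E₁ E₂ : Set α} (hd : Disjoint E₁ E₂)
    (hA : A ⊆ E₁) (hB : B ⊆ E₂) : (A ∪ B) ∩ E₂ = B := by
  rw [union_comm]; exact union_inter_left' hd.symm hB hA

lemma decomp_eq {E₁ E₂ : Set α} (hd : Disjoint E₁ E₂) {x x' y y' : α → ℝ}
    (hx : ∀ e ∉ E₁, x e = 0) (hx' : ∀ e ∉ E₁, x' e = 0)
    (hy : ∀ e ∉ E₂, y e = 0) (hy' : ∀ e ∉ E₂, y' e = 0)
    (heq : x + y = x' + y') : x = x' ∧ y = y' := by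
  constructor <;> funext e
  · by_cases he : e ∈ E₁
    · have he2 : e ∉ E₂ := fun h2 => Set.disjoint_left.mp hd he h2
      have := congrFun heq e
      simpa [Pi.add_apply, hy e he2, hy' e he2] using this
    · rw [hx e he, hx' e he]
  · by_cases he : e ∈ E₂
    · have he1 : e ∉ E₁ := fun h1 => Set.disjoint_left.mp hd h1 he
      have := congrFun heq e
      simpa [Pi.add_apply, hx e he1, hx' e he1] using this
    · rw [hy e he, hy' e he]

lemma basePolytope_disjointSum (M₁ M₂ : Matroid α) (h : Disjoint M₁.E M₂.E) :
    basePolytope (M₁.disjointSum M₂ h) = basePolytope M₁ + basePolytope M₂ := by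
  rw [basePolytope, basePolytope, basePolytope, ← convexHull_add]
  congr 1
  ext x
  constructor
  · rintro ⟨B, hB, rfl⟩
    rw [Matroid.disjointSum_isBase_iff] at hB
    obtain ⟨h1, h2, hsub⟩ := hB
    have hBeq : B = (B ∩ M₁.E) ∪ (B ∩ M₂.E) := by
      rw [← Set.inter_union_distrib_left, inter_eq_self_of_subset_left hsub]
    have hdisj : Disjoint (B ∩ M₁.E) (B ∩ M₂.E) :=
      h.mono inter_subset_right inter_subset_right
    rw [hBeq, incVec_union hdisj]
    exact Set.add_mem_add ⟨_, h1, rfl⟩ ⟨_, h2, rfl⟩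
  · intro hx
    obtain ⟨a, ⟨B₁, hB₁, rfl⟩, b, ⟨B₂, hB₂, rfl⟩, rfl⟩ := Set.mem_add.mp hx
    have hdisj : Disjoint B₁ B₂ := h.mono hB₁.subset_ground hB₂.subset_ground
    refine ⟨B₁ ∪ B₂, ?_, (incVec_union hdisj).symm⟩
    rw [Matroid.disjointSum_isBase_iff]
    refine ⟨?_, ?_, Set.union_subset_union hB₁.subset_ground hB₂.subset_ground⟩
    · rw [union_inter_left' h hB₁.subset_ground hB₂.subset_ground]; exact hB₁
    · rw [union_inter_right' h hB₁.subset_ground hB₂.subset_ground]; exact hB₂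

lemma disjointSum_comm' (M₁ M₂ : Matroid α) (h : Disjoint M₁.E M₂.E) :
    M₁.disjointSum M₂ h = M₂.disjointSum M₁ h.symm := by
  apply Matroid.ext_isBase
  · simp [Matroid.disjointSum_ground_eq, union_comm]
  · intro B _
    rw [Matroid.disjointSum_isBase_iff, Matroid.disjointSum_isBase_iff, union_comm M₂.E]
    tauto

end Aux3

section Aux4
open Pointwise
variable {α : Type*}

lemma add_openSegment {p z z₁ z₂ : α → ℝ} (hz : z ∈ openSegment ℝ z₁ z₂) :
    p + z ∈ openSegment ℝ (p + z₁) (p + z₂) := by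
  obtain ⟨a, b, ha, hb, hab, rfl⟩ := hz
  refine ⟨a, b, ha, hb, hab, ?_⟩
  funext e
  simp only [Pi.add_apply, Pi.smul_apply, smul_eq_mul]
  linear_combination (p e) * hab

lemma indicator_openSegment {E₁ : Set α} {x x₁ x₂ : α → ℝ}
    (hx : x ∈ openSegment ℝ x₁ x₂) :
    E₁.indicator x ∈ openSegment ℝ (E₁.indicator x₁) (E₁.indicator x₂) := by
  obtain ⟨a, b, ha, hb, hab, rfl⟩ := hx
  refine ⟨a, b, ha, hb, hab, ?_⟩
  funext e
  by_cases he : e ∈ E₁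
  · simp [Set.indicator_of_mem he, Pi.add_apply, Pi.smul_apply, smul_eq_mul]
  · simp [Set.indicator_of_notMem he, Pi.add_apply, Pi.smul_apply, smul_eq_mul]

lemma indicator_decomp {E₁ E₂ : Set α} (hd : Disjoint E₁ E₂) {x y : α → ℝ}
    (hx : ∀ e ∉ E₁, x e = 0) (hy : ∀ e ∉ E₂, y e = 0) :
    E₁.indicator (x + y) = x := by
  funext e
  by_cases he : e ∈ E₁
  · have he2 : e ∉ E₂ := fun h2 => Set.disjoint_left.mp hd he h2
    simp [Set.indicator_of_mem he, Pi.add_apply, hy e he2]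
  · simp [Set.indicator_of_notMem he, hx e he]

lemma extreme_add {E₁ E₂ : Set α} (hd : Disjoint E₁ E₂) {P Q C : Set (α → ℝ)}
    (hP : ∀ x ∈ P, ∀ e ∉ E₁, x e = 0) (hQ : ∀ y ∈ Q, ∀ e ∉ E₂, y e = 0)
    (hC : C ⊆ Q) (hex : IsExtreme ℝ Q C) : IsExtreme ℝ (P + Q) (P + C) := by
  constructor
  · exact Set.add_subset_add_left hC
  · rintro z₁ hz₁ z₂ hz₂ z hz hseg
    obtain ⟨p, hp, c, hc, rfl⟩ := Set.mem_add.mp hz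
    obtain ⟨p₁, hp₁, q₁, hq₁, rfl⟩ := Set.mem_add.mp hz₁
    obtain ⟨p₂, hp₂, q₂, hq₂, rfl⟩ := Set.mem_add.mp hz₂
    have hcsupp : ∀ e ∉ E₂, c e = 0 := hQ c (hC hc)
    have e1 : E₂.indicator (p + c) = c := by
      rw [add_comm]; exact indicator_decomp hd.symm hcsupp (hP p hp)
    have e2 : E₂.indicator (p₁ + q₁) = q₁ := by
      rw [add_comm]; exact indicator_decomp hd.symm (hQ q₁ hq₁) (hP p₁ hp₁)
    have e3 : E₂.indicator (p₂ + q₂) = q₂ := by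
      rw [add_comm]; exact indicator_decomp hd.symm (hQ q₂ hq₂) (hP p₂ hp₂)
    have hseg' : c ∈ openSegment ℝ q₁ q₂ := by
      have := indicator_openSegment (E₁ := E₂) hseg
      rwa [e1, e2, e3] at this
    have hq₁C := hex.2 hq₁ hq₂ hc hseg'
    have hq₂C := hex.right_mem_of_mem_openSegment hq₁ hq₂ hc hseg'
    exact Set.add_mem_add hp₁ hq₁C

lemma extreme_cancel {E₁ E₂ : Set α} (hd : Disjoint E₁ E₂) {P Q C : Set (α → ℝ)}
    (hPne : P.Nonempty)
    (hP : ∀ x ∈ P, ∀ e ∉ E₁, x e = 0) (hQ : ∀ y ∈ Q, ∀ e ∉ E₂, y e = 0)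
    (hCs : ∀ y ∈ C, ∀ e ∉ E₂, y e = 0)
    (hex : IsExtreme ℝ (P + Q) (P + C)) : IsExtreme ℝ Q C := by
  obtain ⟨p, hp⟩ := hPne
  constructor
  · intro c hc
    have hm : p + c ∈ P + C := Set.add_mem_add hp hc
    obtain ⟨p', hp', q, hq, heq⟩ := Set.mem_add.mp (hex.1 hm)
    obtain ⟨-, hcq⟩ := decomp_eq hd (hP p hp) (hP p' hp') (hCs c hc) (hQ q hq) heq.symm
    rw [hcq]; exact hq
  · rintro z₁ hz₁ z₂ hz₂ z hz hseg
    have h₁ : p + z ∈ P + C := Set.add_mem_add hp hz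
    have hm₁ : p + z₁ ∈ P + Q := Set.add_mem_add hp hz₁
    have hm₂ : p + z₂ ∈ P + Q := Set.add_mem_add hp hz₂
    have hc₁ := hex.2 hm₁ hm₂ h₁ (add_openSegment hseg)
    have hc₂ := hex.right_mem_of_mem_openSegment hm₁ hm₂ h₁ (add_openSegment hseg)
    refine (fun (hfin : z₁ ∈ C ∧ z₂ ∈ C) => hfin.1) ⟨?_, ?_⟩
    · obtain ⟨p', hp', c, hc, heq⟩ := Set.mem_add.mp hc₁
      obtain ⟨-, hzc⟩ := decomp_eq hd (hP p hp) (hP p' hp') (hQ z₁ hz₁) (hCs c hc) heq.symm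
      rw [hzc]; exact hc
    · obtain ⟨p', hp', c, hc, heq⟩ := Set.mem_add.mp hc₂
      obtain ⟨-, hzc⟩ := decomp_eq hd (hP p hp) (hP p' hp') (hQ z₂ hz₂) (hCs c hc) heq.symm
      rw [hzc]; exact hc

lemma add_inter_add {E₁ E₂ : Set α} (hd : Disjoint E₁ E₂) {P Q₁ Q₂ : Set (α → ℝ)}
    (hP : ∀ x ∈ P, ∀ e ∉ E₁, x e = 0)
    (hQ₁ : ∀ y ∈ Q₁, ∀ e ∉ E₂, y e = 0) (hQ₂ : ∀ y ∈ Q₂, ∀ e ∉ E₂, y e = 0) :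
    (P + Q₁) ∩ (P + Q₂) = P + (Q₁ ∩ Q₂) := by
  ext z
  constructor
  · rintro ⟨h1, h2⟩
    obtain ⟨p, hp, q, hq, heq⟩ := Set.mem_add.mp h1
    obtain ⟨p', hp', q', hq', heq'⟩ := Set.mem_add.mp h2
    have : p + q = p' + q' := by rw [heq, heq']
    obtain ⟨-, hqq⟩ := decomp_eq hd (hP p hp) (hP p' hp') (hQ₁ q hq) (hQ₂ q' hq') this
    exact ⟨p, hp, q, ⟨hq, hqq ▸ hq'⟩, heq⟩
  · rintro ⟨p, hp, q, ⟨hq1, hq2⟩, heq⟩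
    exact ⟨⟨p, hp, q, hq1, heq⟩, ⟨p, hp, q, hq2, heq⟩⟩

end Aux4

section Aux5
open Pointwise
variable {α : Type*}

lemma rect_aux {M₁ M₂ : Matroid α} {h : Disjoint M₁.E M₂.E} (hfin₁ : M₁.E.Finite)
    {N : Matroid α} (hsub : ∀ ⦃B⦄, N.IsBase B → (M₁.disjointSum M₂ h).IsBase B) :
    ∀ n : ℕ, ∀ A A' B₂ B₂' : Set α, (A \ A').ncard = n →
      M₁.IsBase A → M₁.IsBase A' → B₂ ⊆ M₂.E → B₂' ⊆ M₂.E →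
      N.IsBase (A ∪ B₂) → N.IsBase (A' ∪ B₂') → N.IsBase (A' ∪ B₂) := by
  intro n
  induction n with
  | zero =>
    intro A A' B₂ B₂' hn hA hA' hB₂ hB₂' hX hY
    have hfA : (A \ A').Finite := (hfin₁.subset hA.subset_ground).diff
    have hAA' : A ⊆ A' := by
      rw [← Set.diff_eq_empty]
      exact (Set.ncard_eq_zero hfA).mp hn
    have : A = A' := hA.eq_of_subset_isBase hA' hAA'
    rwa [← this]
  | succ n ih =>
    intro A A' B₂ B₂' hn hA hA' hB₂ hB₂' hX hY
    have hfA : (A \ A').Finite := (hfin₁.subset hA.subset_ground).diff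
    have hne : (A \ A').Nonempty := Set.nonempty_of_ncard_ne_zero (by omega)
    obtain ⟨e, he⟩ := hne
    have heE₁ : e ∈ M₁.E := hA.subset_ground he.1
    have heB₂' : e ∉ B₂' := fun hmem => Set.disjoint_left.mp h heE₁ (hB₂' hmem)
    have heB₂ : e ∉ B₂ := fun hmem => Set.disjoint_left.mp h heE₁ (hB₂ hmem)
    have heX : e ∈ (A ∪ B₂) \ (A' ∪ B₂') := by
      refine ⟨Or.inl he.1, ?_⟩
      rintro (h' | h')
      · exact he.2 h'
      · exact heB₂' h'
    obtain ⟨f, hf, hZ⟩ := hX.exchange hY heX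
    have hZM := hsub hZ
    rw [Matroid.disjointSum_isBase_iff] at hZM
    by_cases hfA' : f ∈ A'
    · have hfE₁ : f ∈ M₁.E := hA'.subset_ground hfA'
      have hfB₂ : f ∉ B₂ := fun hmem => Set.disjoint_left.mp h hfE₁ (hB₂ hmem)
      have hfnotA : f ∉ A := fun hmem => hf.2 (Or.inl hmem)
      have hZeq : insert f ((A ∪ B₂) \ {e}) = insert f (A \ {e}) ∪ B₂ := by
        rw [Set.union_diff_distrib, Set.diff_singleton_eq_self heB₂, Set.insert_union]
      set A₂ := insert f (A \ {e}) with hA₂def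
      have hA₂sub : A₂ ⊆ M₁.E :=
        Set.insert_subset hfE₁ (Set.diff_subset.trans hA.subset_ground)
      have hinterA : (A₂ ∪ B₂) ∩ M₁.E = A₂ := union_inter_left' h hA₂sub hB₂
      have hA₂ : M₁.IsBase A₂ := by
        have h1 := hZM.1
        rw [hZeq, hinterA] at h1
        exact h1
      have hZ' : N.IsBase (A₂ ∪ B₂) := by rwa [hZeq] at hZ
      have hcard : (A₂ \ A').ncard = n := by
        have hset : A₂ \ A' = (A \ A') \ {e} := by
          rw [hA₂def, Set.insert_diff_of_mem _ hfA', Set.diff_diff_comm]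
        rw [hset, Set.ncard_diff_singleton_of_mem he, hn]; omega
      exact ih A₂ A' B₂ B₂' hcard hA₂ hA' hB₂ hB₂' hZ' hY
    · have hfB₂' : f ∈ B₂' := hf.1.resolve_left hfA'
      have hfE₂ : f ∈ M₂.E := hB₂' hfB₂'
      have hfE₁ : f ∉ M₁.E := fun hmem => Set.disjoint_left.mp h hmem hfE₂
      exfalso
      have hZeq : insert f ((A ∪ B₂) \ {e}) ∩ M₁.E = A \ {e} := by
        ext x
        simp only [Set.mem_inter_iff, Set.mem_insert_iff, Set.mem_diff, Set.mem_union,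
          Set.mem_singleton_iff]
        constructor
        · rintro ⟨h1 | ⟨h2 | h2, h3⟩, h4⟩
          · exact absurd (h1 ▸ h4) hfE₁
          · exact ⟨h2, h3⟩
          · exact absurd h4 (fun hmem => Set.disjoint_left.mp h hmem (hB₂ h2))
        · rintro ⟨h1, h2⟩
          exact ⟨Or.inr ⟨Or.inl h1, h2⟩, hA.subset_ground h1⟩
      have hbad : M₁.IsBase (A \ {e}) := by
        have h1 := hZM.1
        rwa [hZeq] at h1
      have : A \ {e} = A := hbad.eq_of_subset_isBase hA Set.diff_subset
      have : e ∈ A \ {e} := this.symm ▸ he.1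
      exact this.2 rfl

lemma rect {M₁ M₂ : Matroid α} {h : Disjoint M₁.E M₂.E} (hfin₁ : M₁.E.Finite)
    {N : Matroid α} (hsub : ∀ ⦃B⦄, N.IsBase B → (M₁.disjointSum M₂ h).IsBase B)
    {B B' : Set α} (hB : N.IsBase B) (hB' : N.IsBase B') :
    N.IsBase ((B' ∩ M₁.E) ∪ (B ∩ M₂.E)) := by
  have hBM := hsub hB
  have hB'M := hsub hB'
  rw [Matroid.disjointSum_isBase_iff] at hBM hB'M
  have hBeq : B = (B ∩ M₁.E) ∪ (B ∩ M₂.E) := by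
    rw [← Set.inter_union_distrib_left, inter_eq_self_of_subset_left hBM.2.2]
  have hB'eq : B' = (B' ∩ M₁.E) ∪ (B' ∩ M₂.E) := by
    rw [← Set.inter_union_distrib_left, inter_eq_self_of_subset_left hB'M.2.2]
  exact rect_aux hfin₁ hsub ((B ∩ M₁.E) \ (B' ∩ M₁.E)).ncard
    (B ∩ M₁.E) (B' ∩ M₁.E) (B ∩ M₂.E) (B' ∩ M₂.E) rfl hBM.1 hB'M.1
    Set.inter_subset_right Set.inter_subset_right (hBeq ▸ hB) (hB'eq ▸ hB')

end Aux5

section Aux6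
open Pointwise
variable {α : Type*}

lemma bexchange {M₁ M₂ : Matroid α} (h : Disjoint M₁.E M₂.E)
    (ℬ : Set (Set α)) (N : Matroid α) (hb : ∀ C ∈ ℬ, M₂.IsBase C)
    (hN : ∀ B, N.IsBase B ↔ ∃ A C, M₁.IsBase A ∧ C ∈ ℬ ∧ B = A ∪ C) :
    Matroid.ExchangeProperty (· ∈ ℬ) := by
  intro X Y hX hY e he
  obtain ⟨A₀, hA₀⟩ := M₁.exists_isBase
  have hXE : X ⊆ M₂.E := (hb X hX).subset_ground
  have hYE : Y ⊆ M₂.E := (hb Y hY).subset_ground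
  have hXb : N.IsBase (A₀ ∪ X) := (hN _).mpr ⟨A₀, X, hA₀, hX, rfl⟩
  have hYb : N.IsBase (A₀ ∪ Y) := (hN _).mpr ⟨A₀, Y, hA₀, hY, rfl⟩
  have heA₀ : e ∉ A₀ := fun hmem => Set.disjoint_left.mp h (hA₀.subset_ground hmem) (hXE he.1)
  have heXY : e ∈ (A₀ ∪ X) \ (A₀ ∪ Y) := by
    refine ⟨Or.inr he.1, ?_⟩
    rintro (h' | h')
    · exact heA₀ h'
    · exact he.2 h'
  obtain ⟨f, hf, hZ⟩ := hXb.exchange hYb heXY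
  have hfA₀ : f ∉ A₀ := fun hmem => hf.2 (Or.inl hmem)
  have hfY : f ∈ Y := hf.1.resolve_left hfA₀
  have hfX : f ∉ X := fun hmem => hf.2 (Or.inr hmem)
  rw [hN] at hZ
  obtain ⟨A', C', hA', hC', hZeq⟩ := hZ
  have hZ2 : insert f ((A₀ ∪ X) \ {e}) = A₀ ∪ insert f (X \ {e}) := by
    rw [Set.union_diff_distrib, Set.diff_singleton_eq_self heA₀, Set.union_insert]
  have hWE₂ : insert f (X \ {e}) ⊆ M₂.E :=
    Set.insert_subset (hYE hfY) (Set.diff_subset.trans hXE)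
  have hC'eq : C' = insert f (X \ {e}) := by
    have h1 : (A' ∪ C') ∩ M₂.E = C' :=
      union_inter_right' h hA'.subset_ground ((hb C' hC').subset_ground)
    have h2 : (A₀ ∪ insert f (X \ {e})) ∩ M₂.E = insert f (X \ {e}) :=
      union_inter_right' h hA₀.subset_ground hWE₂
    rw [← h1, ← hZeq, hZ2, h2]
  exact ⟨f, ⟨hfY, hfX⟩, hC'eq ▸ hC'⟩

lemma split_side (M₁ M₂ : Matroid α) (hfin₂ : M₂.E.Finite) (h : Disjoint M₁.E M₂.E)
    (N₁ N₂ : Matroid α) (ℬ₁ ℬ₂ : Set (Set α))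
    (hb₁ : ∀ C ∈ ℬ₁, M₂.IsBase C) (hb₂ : ∀ C ∈ ℬ₂, M₂.IsBase C)
    (hN₁ : ∀ B, N₁.IsBase B ↔ ∃ A C, M₁.IsBase A ∧ C ∈ ℬ₁ ∧ B = A ∪ C)
    (hN₂ : ∀ B, N₂.IsBase B ↔ ∃ A C, M₁.IsBase A ∧ C ∈ ℬ₂ ∧ B = A ∪ C)
    (hun : basePolytope (M₁.disjointSum M₂ h) = basePolytope N₁ ∪ basePolytope N₂)
    (hne₁ : basePolytope N₁ ≠ basePolytope (M₁.disjointSum M₂ h))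
    (hne₂ : basePolytope N₂ ≠ basePolytope (M₁.disjointSum M₂ h))
    (hex₁ : IsExtreme ℝ (basePolytope N₁) (basePolytope N₁ ∩ basePolytope N₂))
    (hex₂ : IsExtreme ℝ (basePolytope N₂) (basePolytope N₁ ∩ basePolytope N₂)) :
    HasHyperplaneSplit M₂ := by
  classical
  obtain ⟨A₀, hA₀⟩ := M₁.exists_isBase
  obtain ⟨B₁₀, hB₁₀⟩ := N₁.exists_isBase
  obtain ⟨B₂₀, hB₂₀⟩ := N₂.exists_isBase
  obtain ⟨A₁', C₁₀, -, hC₁₀, -⟩ := (hN₁ _).mp hB₁₀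
  obtain ⟨A₂', C₂₀, -, hC₂₀, -⟩ := (hN₂ _).mp hB₂₀
  set K₁ : Matroid α := Matroid.ofIsBaseOfFinite hfin₂ (· ∈ ℬ₁) ⟨C₁₀, hC₁₀⟩
    (bexchange h ℬ₁ N₁ hb₁ hN₁) (fun C hC => (hb₁ C hC).subset_ground) with hK₁def
  set K₂ : Matroid α := Matroid.ofIsBaseOfFinite hfin₂ (· ∈ ℬ₂) ⟨C₂₀, hC₂₀⟩
    (bexchange h ℬ₂ N₂ hb₂ hN₂) (fun C hC => (hb₂ C hC).subset_ground) with hK₂def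
  have hK₁B : ∀ C, K₁.IsBase C ↔ C ∈ ℬ₁ := by
    intro C; rw [hK₁def, Matroid.ofIsBaseOfFinite_isBase]
  have hK₂B : ∀ C, K₂.IsBase C ↔ C ∈ ℬ₂ := by
    intro C; rw [hK₂def, Matroid.ofIsBaseOfFinite_isBase]
  have hbpN₁ : basePolytope N₁ = basePolytope M₁ + basePolytope K₁ := by
    simp only [basePolytope]
    rw [← convexHull_add]
    congr 1
    ext x
    constructor
    · rintro ⟨B, hB, rfl⟩
      obtain ⟨A, C, hA, hC, rfl⟩ := (hN₁ _).mp hB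
      rw [incVec_union (h.mono hA.subset_ground (hb₁ C hC).subset_ground)]
      exact Set.add_mem_add ⟨A, hA, rfl⟩ ⟨C, (hK₁B C).mpr hC, rfl⟩
    · intro hx
      obtain ⟨a, ⟨A, hA, rfl⟩, b, ⟨C, hC, rfl⟩, rfl⟩ := Set.mem_add.mp hx
      have hC' : C ∈ ℬ₁ := (hK₁B C).mp hC
      exact ⟨A ∪ C, (hN₁ _).mpr ⟨A, C, hA, hC', rfl⟩,
        (incVec_union (h.mono hA.subset_ground (hb₁ C hC').subset_ground)).symm⟩
  have hbpN₂ : basePolytope N₂ = basePolytope M₁ + basePolytope K₂ := by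
    simp only [basePolytope]
    rw [← convexHull_add]
    congr 1
    ext x
    constructor
    · rintro ⟨B, hB, rfl⟩
      obtain ⟨A, C, hA, hC, rfl⟩ := (hN₂ _).mp hB
      rw [incVec_union (h.mono hA.subset_ground (hb₂ C hC).subset_ground)]
      exact Set.add_mem_add ⟨A, hA, rfl⟩ ⟨C, (hK₂B C).mpr hC, rfl⟩
    · intro hx
      obtain ⟨a, ⟨A, hA, rfl⟩, b, ⟨C, hC, rfl⟩, rfl⟩ := Set.mem_add.mp hx
      have hC' : C ∈ ℬ₂ := (hK₂B C).mp hC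
      exact ⟨A ∪ C, (hN₂ _).mpr ⟨A, C, hA, hC', rfl⟩,
        (incVec_union (h.mono hA.subset_ground (hb₂ C hC').subset_ground)).symm⟩
  have hQ₁sub : basePolytope K₁ ⊆ basePolytope M₂ := by
    simp only [basePolytope]
    apply convexHull_mono
    rintro x ⟨C, hC, rfl⟩
    exact ⟨C, hb₁ C ((hK₁B C).mp hC), rfl⟩
  have hQ₂sub : basePolytope K₂ ⊆ basePolytope M₂ := by
    simp only [basePolytope]
    apply convexHull_mono
    rintro x ⟨C, hC, rfl⟩
    exact ⟨C, hb₂ C ((hK₂B C).mp hC), rfl⟩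
  have hPsupp : ∀ x ∈ basePolytope M₁, ∀ e ∉ M₁.E, x e = 0 :=
    fun x hx => basePolytope_supported M₁ hx
  have hQ₁supp : ∀ y ∈ basePolytope K₁, ∀ e ∉ M₂.E, y e = 0 :=
    fun y hy => basePolytope_supported M₂ (hQ₁sub hy)
  have hQ₂supp : ∀ y ∈ basePolytope K₂, ∀ e ∉ M₂.E, y e = 0 :=
    fun y hy => basePolytope_supported M₂ (hQ₂sub hy)
  have hbpSum : basePolytope (M₁.disjointSum M₂ h) = basePolytope M₁ + basePolytope M₂ :=
    basePolytope_disjointSum M₁ M₂ h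
  have hxA₀ : incVec A₀ ∈ basePolytope M₁ := incVec_mem_basePolytope hA₀
  have hQun : basePolytope M₂ = basePolytope K₁ ∪ basePolytope K₂ := by
    apply Set.Subset.antisymm
    · intro y hy
      have hxy : incVec A₀ + y ∈ basePolytope N₁ ∪ basePolytope N₂ := by
        rw [← hun, hbpSum]
        exact Set.add_mem_add hxA₀ hy
      have hysupp : ∀ e ∉ M₂.E, y e = 0 := basePolytope_supported M₂ hy
      rcases hxy with h' | h'
      · rw [hbpN₁] at h'
        obtain ⟨p', hp', q, hq, heq⟩ := Set.mem_add.mp h'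
        obtain ⟨-, hyq⟩ := decomp_eq h (hPsupp _ hxA₀) (hPsupp p' hp') hysupp
          (hQ₁supp q hq) heq.symm
        exact Or.inl (hyq ▸ hq)
      · rw [hbpN₂] at h'
        obtain ⟨p', hp', q, hq, heq⟩ := Set.mem_add.mp h'
        obtain ⟨-, hyq⟩ := decomp_eq h (hPsupp _ hxA₀) (hPsupp p' hp') hysupp
          (hQ₂supp q hq) heq.symm
        exact Or.inr (hyq ▸ hq)
    · exact Set.union_subset hQ₁sub hQ₂sub
  have hss₁ : basePolytope K₁ ⊂ basePolytope M₂ := by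
    rw [Set.ssubset_iff_subset_ne]
    refine ⟨hQ₁sub, fun heq => hne₁ ?_⟩
    rw [hbpN₁, heq, ← hbpSum]
  have hss₂ : basePolytope K₂ ⊂ basePolytope M₂ := by
    rw [Set.ssubset_iff_subset_ne]
    refine ⟨hQ₂sub, fun heq => hne₂ ?_⟩
    rw [hbpN₂, heq, ← hbpSum]
  have hInt : basePolytope N₁ ∩ basePolytope N₂
      = basePolytope M₁ + (basePolytope K₁ ∩ basePolytope K₂) := by
    rw [hbpN₁, hbpN₂]
    exact add_inter_add h hPsupp hQ₁supp hQ₂supp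
  have hexA : IsExtreme ℝ (basePolytope K₁) (basePolytope K₁ ∩ basePolytope K₂) := by
    apply extreme_cancel h ⟨incVec A₀, hxA₀⟩ hPsupp hQ₁supp
      (fun y hy => hQ₁supp y hy.1)
    rw [← hInt, ← hbpN₁]
    exact hex₁
  have hexB : IsExtreme ℝ (basePolytope K₂) (basePolytope K₁ ∩ basePolytope K₂) := by
    apply extreme_cancel h ⟨incVec A₀, hxA₀⟩ hPsupp hQ₂supp
      (fun y hy => hQ₂supp y hy.2)
    rw [← hInt, ← hbpN₂]
    exact hex₂
  exact ⟨K₁, K₂, by rw [hK₁def]; rfl, by rw [hK₂def]; rfl, hQun, hss₁, hss₂, hexA, hexB⟩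

end Aux6

section Aux7
open Pointwise
variable {α : Type*}

lemma back (M₁ M₂ : Matroid α) (h : Disjoint M₁.E M₂.E) :
    HasHyperplaneSplit M₂ → HasHyperplaneSplit (M₁.disjointSum M₂ h) := by
  rintro ⟨N₁, N₂, hE₁, hE₂, hun, hss₁, hss₂, hx₁, hx₂⟩
  have hdj₁ : Disjoint M₁.E N₁.E := by rw [hE₁]; exact h
  have hdj₂ : Disjoint M₁.E N₂.E := by rw [hE₂]; exact h
  obtain ⟨A₀, hA₀⟩ := M₁.exists_isBase
  have hxA₀ : incVec A₀ ∈ basePolytope M₁ := incVec_mem_basePolytope hA₀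
  have hPsupp : ∀ x ∈ basePolytope M₁, ∀ e ∉ M₁.E, x e = 0 :=
    fun x hx => basePolytope_supported M₁ hx
  have hQ₁supp : ∀ y ∈ basePolytope N₁, ∀ e ∉ M₂.E, y e = 0 :=
    fun y hy => hE₁ ▸ basePolytope_supported N₁ hy
  have hQ₂supp : ∀ y ∈ basePolytope N₂, ∀ e ∉ M₂.E, y e = 0 :=
    fun y hy => hE₂ ▸ basePolytope_supported N₂ hy
  have hQsupp : ∀ y ∈ basePolytope M₂, ∀ e ∉ M₂.E, y e = 0 :=
    fun y hy => basePolytope_supported M₂ hy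
  have hbp₁ : basePolytope (M₁.disjointSum N₁ hdj₁) = basePolytope M₁ + basePolytope N₁ :=
    basePolytope_disjointSum M₁ N₁ hdj₁
  have hbp₂ : basePolytope (M₁.disjointSum N₂ hdj₂) = basePolytope M₁ + basePolytope N₂ :=
    basePolytope_disjointSum M₁ N₂ hdj₂
  have hbpS : basePolytope (M₁.disjointSum M₂ h) = basePolytope M₁ + basePolytope M₂ :=
    basePolytope_disjointSum M₁ M₂ h
  refine ⟨M₁.disjointSum N₁ hdj₁, M₁.disjointSum N₂ hdj₂, ?_, ?_, ?_, ?_, ?_, ?_, ?_⟩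
  · simp [Matroid.disjointSum_ground_eq, hE₁]
  · simp [Matroid.disjointSum_ground_eq, hE₂]
  · rw [hbp₁, hbp₂, hbpS, hun, Set.add_union]
  · rw [hbp₁, hbpS, Set.ssubset_iff_subset_ne]
    constructor
    · exact Set.add_subset_add_left hss₁.1
    · intro heq
      obtain ⟨y, hy, hynot⟩ := Set.exists_of_ssubset hss₁
      have : incVec A₀ + y ∈ basePolytope M₁ + basePolytope N₁ := by
        rw [heq]; exact Set.add_mem_add hxA₀ hy
      obtain ⟨p', hp', q, hq, heq'⟩ := Set.mem_add.mp this
      obtain ⟨-, hyq⟩ := decomp_eq h (hPsupp _ hxA₀) (hPsupp p' hp') (hQsupp y hy)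
        (hQ₁supp q hq) heq'.symm
      exact hynot (hyq ▸ hq)
  · rw [hbp₂, hbpS, Set.ssubset_iff_subset_ne]
    constructor
    · exact Set.add_subset_add_left hss₂.1
    · intro heq
      obtain ⟨y, hy, hynot⟩ := Set.exists_of_ssubset hss₂
      have : incVec A₀ + y ∈ basePolytope M₁ + basePolytope N₂ := by
        rw [heq]; exact Set.add_mem_add hxA₀ hy
      obtain ⟨p', hp', q, hq, heq'⟩ := Set.mem_add.mp this
      obtain ⟨-, hyq⟩ := decomp_eq h (hPsupp _ hxA₀) (hPsupp p' hp') (hQsupp y hy)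
        (hQ₂supp q hq) heq'.symm
      exact hynot (hyq ▸ hq)
  · rw [hbp₁, hbp₂, add_inter_add h hPsupp hQ₁supp hQ₂supp]
    exact extreme_add h hPsupp hQ₁supp (fun y hy => hy.1) hx₁
  · rw [hbp₁, hbp₂, add_inter_add h hPsupp hQ₁supp hQ₂supp]
    exact extreme_add h hPsupp hQ₂supp (fun y hy => hy.2) hx₂

end Aux7

section Aux8
open Pointwise
variable {α : Type*}

theorem forward13 (M₁ M₂ : Matroid α)
    (hfin₁ : M₁.E.Finite) (hfin₂ : M₂.E.Finite) (h : Disjoint M₁.E M₂.E) :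
    HasHyperplaneSplit (M₁.disjointSum M₂ h) →
      HasHyperplaneSplit M₁ ∨ HasHyperplaneSplit M₂ := by
  rintro ⟨N₁, N₂, hE₁, hE₂, hun, hss₁, hss₂, hx₁, hx₂⟩
  obtain ⟨A₀, hA₀⟩ := M₁.exists_isBase
  obtain ⟨C₀, hC₀⟩ := M₂.exists_isBase
  have hsub₁ : ∀ ⦃B⦄, N₁.IsBase B → (M₁.disjointSum M₂ h).IsBase B := by
    intro B hB
    apply base_of_incVec_mem
    rw [hun]
    exact Or.inl (incVec_mem_basePolytope hB)
  have hsub₂ : ∀ ⦃B⦄, N₂.IsBase B → (M₁.disjointSum M₂ h).IsBase B := by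
    intro B hB
    apply base_of_incVec_mem
    rw [hun]
    exact Or.inr (incVec_mem_basePolytope hB)
  have hcov : ∀ ⦃B⦄, (M₁.disjointSum M₂ h).IsBase B → N₁.IsBase B ∨ N₂.IsBase B := by
    intro B hB
    have := incVec_mem_basePolytope hB
    rw [hun] at this
    rcases this with h' | h'
    · exact Or.inl (base_of_incVec_mem h')
    · exact Or.inr (base_of_incVec_mem h')
  have hdec₁ : ∀ ⦃B⦄, N₁.IsBase B →
      M₁.IsBase (B ∩ M₁.E) ∧ M₂.IsBase (B ∩ M₂.E) ∧ B = (B ∩ M₁.E) ∪ (B ∩ M₂.E) := by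
    intro B hB
    have := hsub₁ hB
    rw [Matroid.disjointSum_isBase_iff] at this
    exact ⟨this.1, this.2.1, by
      rw [← Set.inter_union_distrib_left, inter_eq_self_of_subset_left this.2.2]⟩
  have hdec₂ : ∀ ⦃B⦄, N₂.IsBase B →
      M₁.IsBase (B ∩ M₁.E) ∧ M₂.IsBase (B ∩ M₂.E) ∧ B = (B ∩ M₁.E) ∪ (B ∩ M₂.E) := by
    intro B hB
    have := hsub₂ hB
    rw [Matroid.disjointSum_isBase_iff] at this
    exact ⟨this.1, this.2.1, by
      rw [← Set.inter_union_distrib_left, inter_eq_self_of_subset_left this.2.2]⟩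
  have hkey₁ := fun {B B'} (hB : N₁.IsBase B) (hB' : N₁.IsBase B') => rect hfin₁ hsub₁ hB hB'
  have hkey₂ := fun {B B'} (hB : N₂.IsBase B) (hB' : N₂.IsBase B') => rect hfin₁ hsub₂ hB hB'
  -- fullness predicates
  have notboth₁ : ¬ ((∀ A, M₁.IsBase A → ∃ B, N₁.IsBase B ∧ A = B ∩ M₁.E) ∧
      (∀ C, M₂.IsBase C → ∃ B, N₁.IsBase B ∧ C = B ∩ M₂.E)) := by
    rintro ⟨hAF, hBF⟩
    apply hss₁.2
    simp only [basePolytope]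
    refine convexHull_min ?_ (convex_convexHull ℝ _)
    rintro x ⟨B, hB, rfl⟩
    rw [Matroid.disjointSum_isBase_iff] at hB
    obtain ⟨Ba, hBa, hAeq⟩ := hAF _ hB.1
    obtain ⟨Bb, hBb, hCeq⟩ := hBF _ hB.2.1
    have := hkey₁ hBb hBa
    rw [← hAeq, ← hCeq] at this
    have hBeq : B = (B ∩ M₁.E) ∪ (B ∩ M₂.E) := by
      rw [← Set.inter_union_distrib_left, inter_eq_self_of_subset_left hB.2.2]
    rw [← hBeq] at this
    exact subset_convexHull ℝ _ ⟨B, this, rfl⟩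
  have notboth₂ : ¬ ((∀ A, M₁.IsBase A → ∃ B, N₂.IsBase B ∧ A = B ∩ M₁.E) ∧
      (∀ C, M₂.IsBase C → ∃ B, N₂.IsBase B ∧ C = B ∩ M₂.E)) := by
    rintro ⟨hAF, hBF⟩
    apply hss₂.2
    simp only [basePolytope]
    refine convexHull_min ?_ (convex_convexHull ℝ _)
    rintro x ⟨B, hB, rfl⟩
    rw [Matroid.disjointSum_isBase_iff] at hB
    obtain ⟨Ba, hBa, hAeq⟩ := hAF _ hB.1
    obtain ⟨Bb, hBb, hCeq⟩ := hBF _ hB.2.1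
    have := hkey₂ hBb hBa
    rw [← hAeq, ← hCeq] at this
    have hBeq : B = (B ∩ M₁.E) ∪ (B ∩ M₂.E) := by
      rw [← Set.inter_union_distrib_left, inter_eq_self_of_subset_left hB.2.2]
    rw [← hBeq] at this
    exact subset_convexHull ℝ _ ⟨B, this, rfl⟩
  have sumbase : ∀ {A C}, M₁.IsBase A → M₂.IsBase C → (M₁.disjointSum M₂ h).IsBase (A ∪ C) := by
    intro A C hA hC
    rw [Matroid.disjointSum_isBase_iff]
    refine ⟨?_, ?_, Set.union_subset_union hA.subset_ground hC.subset_ground⟩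
    · rw [union_inter_left' h hA.subset_ground hC.subset_ground]; exact hA
    · rw [union_inter_right' h hA.subset_ground hC.subset_ground]; exact hC
  have dichot₁ : (∀ A, M₁.IsBase A → ∃ B, N₁.IsBase B ∧ A = B ∩ M₁.E) ∨
      (∀ C, M₂.IsBase C → ∃ B, N₂.IsBase B ∧ C = B ∩ M₂.E) := by
    by_contra hcon
    push_neg at hcon
    obtain ⟨⟨A, hA, hAno⟩, ⟨C, hC, hCno⟩⟩ := hcon
    rcases hcov (sumbase hA hC) with h' | h'
    · exact hAno (A ∪ C) h' (union_inter_left' h hA.subset_ground hC.subset_ground).symm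
    · exact hCno (A ∪ C) h' (union_inter_right' h hA.subset_ground hC.subset_ground).symm
  have dichot₂ : (∀ A, M₁.IsBase A → ∃ B, N₂.IsBase B ∧ A = B ∩ M₁.E) ∨
      (∀ C, M₂.IsBase C → ∃ B, N₁.IsBase B ∧ C = B ∩ M₂.E) := by
    by_contra hcon
    push_neg at hcon
    obtain ⟨⟨A, hA, hAno⟩, ⟨C, hC, hCno⟩⟩ := hcon
    rcases hcov (sumbase hA hC) with h' | h'
    · exact hCno (A ∪ C) h' (union_inter_right' h hA.subset_ground hC.subset_ground).symm
    · exact hAno (A ∪ C) h' (union_inter_left' h hA.subset_ground hC.subset_ground).symm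
  by_cases hAF1 : ∀ A, M₁.IsBase A → ∃ B, N₁.IsBase B ∧ A = B ∩ M₁.E
  · -- M₂ splits
    have hBnF1 : ¬ ∀ C, M₂.IsBase C → ∃ B, N₁.IsBase B ∧ C = B ∩ M₂.E :=
      fun hBF => notboth₁ ⟨hAF1, hBF⟩
    have hAF2 : ∀ A, M₁.IsBase A → ∃ B, N₂.IsBase B ∧ A = B ∩ M₁.E :=
      dichot₂.resolve_right hBnF1
    refine Or.inr (split_side M₁ M₂ hfin₂ h N₁ N₂
      {C | ∃ B, N₁.IsBase B ∧ C = B ∩ M₂.E} {C | ∃ B, N₂.IsBase B ∧ C = B ∩ M₂.E}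
      ?_ ?_ ?_ ?_ hun hss₁.ne hss₂.ne hx₁ hx₂)
    · rintro C ⟨B, hB, rfl⟩; exact (hdec₁ hB).2.1
    · rintro C ⟨B, hB, rfl⟩; exact (hdec₂ hB).2.1
    · intro B
      constructor
      · intro hB
        exact ⟨B ∩ M₁.E, B ∩ M₂.E, (hdec₁ hB).1, ⟨B, hB, rfl⟩, (hdec₁ hB).2.2⟩
      · rintro ⟨A, C, hA, ⟨B', hB', rfl⟩, rfl⟩
        obtain ⟨Ba, hBa, hAeq⟩ := hAF1 A hA
        have := hkey₁ hB' hBa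
        rwa [← hAeq] at this
    · intro B
      constructor
      · intro hB
        exact ⟨B ∩ M₁.E, B ∩ M₂.E, (hdec₂ hB).1, ⟨B, hB, rfl⟩, (hdec₂ hB).2.2⟩
      · rintro ⟨A, C, hA, ⟨B', hB', rfl⟩, rfl⟩
        obtain ⟨Ba, hBa, hAeq⟩ := hAF2 A hA
        have := hkey₂ hB' hBa
        rwa [← hAeq] at this
  · -- M₁ splits
    have hBF2 : ∀ C, M₂.IsBase C → ∃ B, N₂.IsBase B ∧ C = B ∩ M₂.E :=
      dichot₁.resolve_left hAF1
    have hAnF2 : ¬ ∀ A, M₁.IsBase A → ∃ B, N₂.IsBase B ∧ A = B ∩ M₁.E :=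
      fun hAF => notboth₂ ⟨hAF, hBF2⟩
    have hBF1 : ∀ C, M₂.IsBase C → ∃ B, N₁.IsBase B ∧ C = B ∩ M₂.E :=
      dichot₂.resolve_left hAnF2
    have hswap : M₁.disjointSum M₂ h = M₂.disjointSum M₁ h.symm := disjointSum_comm' M₁ M₂ h
    refine Or.inl (split_side M₂ M₁ hfin₁ h.symm N₁ N₂
      {C | ∃ B, N₁.IsBase B ∧ C = B ∩ M₁.E} {C | ∃ B, N₂.IsBase B ∧ C = B ∩ M₁.E}
      ?_ ?_ ?_ ?_ (by rw [← hswap]; exact hun) (by rw [← hswap]; exact hss₁.ne)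
      (by rw [← hswap]; exact hss₂.ne) hx₁ hx₂)
    · rintro C ⟨B, hB, rfl⟩; exact (hdec₁ hB).1
    · rintro C ⟨B, hB, rfl⟩; exact (hdec₂ hB).1
    · intro B
      constructor
      · intro hB
        exact ⟨B ∩ M₂.E, B ∩ M₁.E, (hdec₁ hB).2.1, ⟨B, hB, rfl⟩,
          by rw [union_comm]; exact (hdec₁ hB).2.2⟩
      · rintro ⟨A, C, hA, ⟨B', hB', rfl⟩, rfl⟩
        obtain ⟨Bb, hBb, hAeq⟩ := hBF1 A hA
        have := hkey₁ hBb hB'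
        rw [← hAeq] at this
        rwa [union_comm] at this
    · intro B
      constructor
      · intro hB
        exact ⟨B ∩ M₂.E, B ∩ M₁.E, (hdec₂ hB).2.1, ⟨B, hB, rfl⟩,
          by rw [union_comm]; exact (hdec₂ hB).2.2⟩
      · rintro ⟨A, C, hA, ⟨B', hB', rfl⟩, rfl⟩
        obtain ⟨Bb, hBb, hAeq⟩ := hBF2 A hA
        have := hkey₂ hBb hB'
        rw [← hAeq] at this
        rwa [union_comm] at this

end Aux8

/-- `P(M₁ ⊕ M₂)` admits a hyperplane split iff `P(M₁)` or `P(M₂)` does. -/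
theorem statement13 {α : Type*} (M₁ M₂ : Matroid α)
    (hfin₁ : M₁.E.Finite) (hfin₂ : M₂.E.Finite) (h : Disjoint M₁.E M₂.E)
    (r₁ r₂ : ℕ) (hr₁ : mrk M₁ = r₁) (hr₂ : mrk M₂ = r₂) :
    HasHyperplaneSplit (M₁.disjointSum M₂ h) ↔
      HasHyperplaneSplit M₁ ∨ HasHyperplaneSplit M₂ := by
  constructor
  · exact forward13 M₁ M₂ hfin₁ hfin₂ h
  · rintro (h1 | h2)
    · rw [disjointSum_comm']
      exact back M₂ M₁ h.symm h1
    · exact back M₁ M₂ h h2
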